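/- Among all left inverses Ψ of a full-column-rank m×k matrix Φ (with H an invertible m×m matrix such that H⁻¹Φ has full column rank), the quantity ‖ΨH‖_{2→2} is minimized by Ψ = (H⁻¹Φ)†H⁻¹; that is, for every Ψ with ΨΦ = I_k, ‖ΨH‖_{2→2} ≥ 1/σ_min(H⁻¹Φ). -/

import Mathlib

open Matrix MeasureTheory Finset
noncomputable section

/-- Euclidean norm of a vector. -/
def norm2 {ι : Type*} [Fintype ι] (v : ι → ℝ) : ℝ := Real.sqrt (∑ i, (v i)^2)
/-- Sup norm of a vector. -/
def normInf {ι : Type*} (v : ι → ℝ) : ℝ := sSup {t | ∃ i, t = |v i|}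
/-- ℓ∞ → ℓ2 operator norm. -/
def normInfTo2 {ι κ : Type*} [Fintype ι] [Fintype κ] (A : Matrix κ ι ℝ) : ℝ :=
  sSup {t | ∃ v : ι → ℝ, (∀ j, |v j| ≤ 1) ∧ t = norm2 (A.mulVec v)}
/-- ℓ2 → ℓ2 (spectral) operator norm. -/
def norm2To2 {ι κ : Type*} [Fintype ι] [Fintype κ] (A : Matrix κ ι ℝ) : ℝ :=
  sSup {t | ∃ v : ι → ℝ, norm2 v ≤ 1 ∧ t = norm2 (A.mulVec v)}
/-- Smallest singular value. -/
def sigmaMin {ι κ : Type*} [Fintype ι] [Fintype κ] (A : Matrix κ ι ℝ) : ℝ :=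
  sInf {t | ∃ v : ι → ℝ, norm2 v = 1 ∧ t = norm2 (A.mulVec v)}
/-- ℓ∞ → ℓ∞ operator norm (max absolute row sum). -/
def normInfInf {ι κ : Type*} [Fintype ι] (A : Matrix κ ι ℝ) : ℝ :=
  sSup {t | ∃ i, t = ∑ j, |A i j|}
/-- The alphabet 𝒜_{L,δ}: L points, spacing 2δ, symmetric about 0. -/
def alphabet (L : ℕ) (δ : ℝ) : Set ℝ := {w | ∃ j : Fin L, w = (2*(j:ℝ) - (L:ℝ) + 1) * δ}
/-- Pseudoinverse of a full-column-rank matrix: A† = (AᵀA)⁻¹Aᵀ. -/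
def pinv {ι : Type*} [Fintype ι] {k : ℕ} (A : Matrix ι (Fin k) ℝ) : Matrix (Fin k) ι ℝ :=
  (Aᵀ*A)⁻¹ * Aᵀ

lemma norm2_nonneg {ι : Type*} [Fintype ι] (v : ι → ℝ) : 0 ≤ norm2 v :=
  Real.sqrt_nonneg _

lemma norm2_eq_zero {ι : Type*} [Fintype ι] {v : ι → ℝ} (h : norm2 v = 0) : v = 0 := by
  have hs : (∑ i, (v i)^2) = 0 := by
    have := Real.sqrt_eq_zero (Finset.sum_nonneg fun i _ => sq_nonneg (v i)) |>.mp h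
    exact this
  funext i
  have := (Finset.sum_eq_zero_iff_of_nonneg (fun i _ => sq_nonneg (v i))).mp hs i (mem_univ i)
  exact pow_eq_zero_iff (by norm_num) |>.mp this

lemma norm2_smul {ι : Type*} [Fintype ι] (c : ℝ) (v : ι → ℝ) :
    norm2 (c • v) = |c| * norm2 v := by
  unfold norm2
  have : ∑ i, ((c • v) i)^2 = c^2 * ∑ i, (v i)^2 := by
    rw [Finset.mul_sum]; congr 1; funext i; simp [mul_pow]
  rw [this, Real.sqrt_mul (sq_nonneg c), Real.sqrt_sq_eq_abs]

lemma norm2_eq_norm {ι : Type*} [Fintype ι] (v : ι → ℝ) :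
    norm2 v = ‖(WithLp.equiv 2 (ι → ℝ)).symm v‖ := by
  rw [EuclideanSpace.norm_eq]
  simp [norm2, sq_abs]

/-- The matrix maps as a bounded operator on Euclidean norm. -/
lemma exists_bound {ι κ : Type*} [Fintype ι] [Fintype κ] (A : Matrix κ ι ℝ) :
    ∃ C : ℝ, 0 ≤ C ∧ ∀ v : ι → ℝ, norm2 (A.mulVec v) ≤ C * norm2 v := by
  let f : EuclideanSpace ℝ ι →ₗ[ℝ] EuclideanSpace ℝ κ :=
    { toFun := fun v => (WithLp.equiv 2 (κ → ℝ)).symm (A.mulVec ((WithLp.equiv 2 (ι → ℝ)) v))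
      map_add' := fun x y => by
        simp only [WithLp.equiv_apply, WithLp.equiv_symm_apply, WithLp.ofLp_add, Matrix.mulVec_add, WithLp.toLp_add]
      map_smul' := fun c x => by
        simp only [WithLp.equiv_apply, WithLp.equiv_symm_apply, WithLp.ofLp_smul, Matrix.mulVec_smul, WithLp.toLp_smul,
          RingHom.id_apply] }
  let g := LinearMap.toContinuousLinearMap f
  refine ⟨‖g‖, norm_nonneg _, fun v => ?_⟩
  have := g.le_opNorm ((WithLp.equiv 2 (ι → ℝ)).symm v)
  simpa [g, f, norm2_eq_norm] using this

theorem stmt_7 (m k : ℕ) (hk : 0 < k) (Φ : Matrix (Fin m) (Fin k) ℝ)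
    (H : Matrix (Fin m) (Fin m) ℝ) (hH : IsUnit H.det)
    (hfull : IsUnit ((H⁻¹ * Φ)ᵀ * (H⁻¹ * Φ)).det) :
    ∀ Ψ : Matrix (Fin k) (Fin m) ℝ, Ψ * Φ = 1 →
      1 / sigmaMin (H⁻¹ * Φ) ≤ norm2To2 (Ψ * H) := by
  intro Ψ hΨ
  set A := H⁻¹ * Φ with hA
  set B := Ψ * H with hB
  have hBA : B * A = 1 := by
    rw [hB, hA, Matrix.mul_assoc, ← Matrix.mul_assoc H, Matrix.mul_nonsing_inv H hH,
      Matrix.one_mul, hΨ]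
  set S : Set ℝ := {t | ∃ v : Fin k → ℝ, norm2 v = 1 ∧ t = norm2 (A.mulVec v)} with hS
  set T : Set ℝ := {t | ∃ v : Fin m → ℝ, norm2 v ≤ 1 ∧ t = norm2 (B.mulVec v)} with hT
  -- T is nonempty and bounded above
  obtain ⟨C, hC0, hC⟩ := exists_bound B
  have hTbdd : BddAbove T := by
    refine ⟨C, fun t ht => ?_⟩
    obtain ⟨v, hv1, rfl⟩ := ht
    calc norm2 (B.mulVec v) ≤ C * norm2 v := hC v
    _ ≤ C * 1 := by nlinarith [norm2_nonneg v]
    _ = C := mul_one C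
  have hT0 : (0:ℝ) ∈ T := by
    refine ⟨0, ?_, ?_⟩
    · simp [norm2]
    · simp [norm2, Matrix.mulVec_zero]
  set N := norm2To2 B with hN
  have hNT : ∀ t ∈ T, t ≤ N := fun t ht => le_csSup hTbdd ht
  have hN0 : 0 ≤ N := hNT 0 hT0
  -- S nonempty
  have hSne : S.Nonempty := by
    have e : Fin k := ⟨0, hk⟩
    let u : Fin k → ℝ := fun i => if i = e then 1 else 0
    refine ⟨norm2 (A.mulVec u), u, ?_, rfl⟩
    unfold norm2
    have h1 : (∑ i, (u i)^2) = 1 := by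
      simp [u, apply_ite (fun x : ℝ => x^2)]
    rw [h1, Real.sqrt_one]
  -- s ≥ 0
  set s := sigmaMin A with hs
  have hs0 : 0 ≤ s := le_csInf hSne (by rintro t ⟨v, -, rfl⟩; exact norm2_nonneg _)
  -- key step: ∀ ε > 0, 1 ≤ N * (s + ε)
  have key : ∀ ε : ℝ, 0 < ε → 1 ≤ N * (s + ε) := by
    intro ε hε
    obtain ⟨t, ht, htlt⟩ := exists_lt_of_csInf_lt hSne
      (show s < s + ε by linarith)
    obtain ⟨v, hv1, rfl⟩ := ht
    set w := A.mulVec v with hw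
    set c := norm2 w with hc
    have hBw : B.mulVec w = v := by
      rw [hw, Matrix.mulVec_mulVec, hBA, Matrix.one_mulVec]
    have hcpos : 0 < c := by
      rcases lt_or_eq_of_le (norm2_nonneg w) with h | h
      · exact h
      · exfalso
        have hw0 : w = 0 := norm2_eq_zero h.symm
        rw [hw0, Matrix.mulVec_zero] at hBw
        rw [← hBw] at hv1
        simp [norm2] at hv1
    -- c⁻¹ ∈ T
    have hmem : c⁻¹ ∈ T := by
      refine ⟨c⁻¹ • w, ?_, ?_⟩
      · rw [norm2_smul, abs_of_pos (inv_pos.mpr hcpos), ← hc, inv_mul_cancel₀ hcpos.ne']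
      · rw [Matrix.mulVec_smul, hBw, norm2_smul, abs_of_pos (inv_pos.mpr hcpos), hv1, mul_one]
    have h1 : c⁻¹ ≤ N := hNT _ hmem
    have h2 : 1 ≤ N * c := by
      rw [← inv_mul_cancel₀ hcpos.ne']
      exact mul_le_mul_of_nonneg_right h1 hcpos.le
    calc (1:ℝ) ≤ N * c := h2
    _ ≤ N * (s + ε) := mul_le_mul_of_nonneg_left htlt.le hN0
  -- N > 0
  have hNpos : 0 < N := by
    by_contra h
    push_neg at h
    have hN' : N = 0 := le_antisymm h hN0
    have := key 1 one_pos
    rw [hN'] at this; linarith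
  -- 1 ≤ N * s
  have h1Ns : 1 ≤ N * s := by
    refine le_of_forall_pos_le_add fun ε hε => ?_
    have := key (ε / N) (div_pos hε hNpos)
    calc (1:ℝ) ≤ N * (s + ε / N) := this
    _ = N * s + ε := by field_simp
  have hspos : 0 < s := by
    rcases lt_or_eq_of_le hs0 with h | h
    · exact h
    · exfalso; rw [← h, mul_zero] at h1Ns; linarith
  rw [div_le_iff₀ hspos]
  linarith [h1Ns]
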